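/- Let N ≥ 2 and suppose u_r : (0,1] → ℝ is continuous, u_r < 0, t ↦ t^{2N−2} u_r(t)² is nondecreasing, and ∫₀^{r} t^{N−1} u_r(t)² dt ≤ K r^{2√(N−1)+2} for all r ∈ (0,1] and some K > 0. Then there is a constant M depending only on N and K such that |u_r(r)| ≤ M r^{−N/2+√(N−1)+1} for all r ∈ (0,1/2]. -/

import Mathlib

open MeasureTheory Set intervalIntegral

/-- First-derivative estimate: if `u_r < 0`, `t^{2N−2} u_r²` is nondecreasing, and
`∫₀^r t^{N−1} u_r² ≤ K r^{2√(N−1)+2}`, then `|u_r(r)| ≤ M r^{−N/2+√(N−1)+1}` on `(0,1/2]`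
for a constant `M` depending only on `N` and `K`. -/
theorem first_derivative_estimate (N : ℕ) (hN : 2 ≤ N) (K : ℝ) (hK : 0 < K) :
    ∃ M : ℝ, 0 < M ∧
      ∀ u_r : ℝ → ℝ,
        ContinuousOn u_r (Set.Ioc (0 : ℝ) 1) →
        (∀ r ∈ Set.Ioc (0 : ℝ) 1, u_r r < 0) →
        MonotoneOn (fun t => t ^ (2 * N - 2) * u_r t ^ 2) (Set.Ioc (0 : ℝ) 1) →
        IntegrableOn (fun t => t ^ (N - 1) * u_r t ^ 2) (Set.Ioo (0 : ℝ) 1) →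
        (∀ r ∈ Set.Ioc (0 : ℝ) 1,
          ∫ t in (0 : ℝ)..r, t ^ (N - 1) * u_r t ^ 2 ≤
            K * r ^ (2 * Real.sqrt ((N : ℝ) - 1) + 2)) →
        ∀ r ∈ Set.Ioc (0 : ℝ) (1 / 2),
          |u_r r| ≤ M * r ^ (-(N : ℝ) / 2 + Real.sqrt ((N : ℝ) - 1) + 1) := by
  set s := Real.sqrt ((N : ℝ) - 1) with hs
  have hs0 : (0:ℝ) ≤ s := Real.sqrt_nonneg _
  refine ⟨Real.sqrt (K * 2 ^ (2 * s + (N : ℝ) + 1)), Real.sqrt_pos.mpr (by positivity), ?_⟩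
  intro u hu hneg hmono hint hbound r hr
  obtain ⟨hr0, hr2⟩ := hr
  have h2r1 : 2 * r ≤ 1 := by linarith
  have h2r0 : (0:ℝ) < 2 * r := by linarith
  have hr1 : r ≤ 1 := by linarith
  set f : ℝ → ℝ := fun t => t ^ (N - 1) * u t ^ 2 with hf
  have hintIoc : IntegrableOn f (Set.Ioc (0:ℝ) 1) := by
    rwa [integrableOn_Ioc_iff_integrableOn_Ioo]
  have hii : ∀ a b : ℝ, 0 ≤ a → b ≤ 1 → a ≤ b → IntervalIntegrable f volume a b := by
    intro a b ha hb hab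
    rw [intervalIntegrable_iff_integrableOn_Ioc_of_le hab]
    exact hintIoc.mono_set (Set.Ioc_subset_Ioc ha hb)
  set c : ℝ := r ^ (2*N-2) * u r ^ 2 / (2*r) ^ (N-1) with hc
  have hlow : ∀ t ∈ Set.Icc r (2*r), c ≤ f t := by
    intro t ht
    have ht0 : 0 < t := lt_of_lt_of_le hr0 ht.1
    have hm := hmono ⟨hr0, hr1⟩ (⟨ht0, le_trans ht.2 h2r1⟩ : t ∈ Set.Ioc (0:ℝ) 1) ht.1
    rw [hc, div_le_iff₀ (by positivity)]
    have h1 : t ^ (2*N-2) * u t ^ 2 = t ^ (N-1) * u t ^ 2 * t ^ (N-1) := by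
      rw [show 2*N-2 = (N-1)+(N-1) from by omega, pow_add]; ring
    calc r ^ (2*N-2) * u r ^ 2 ≤ t ^ (2*N-2) * u t ^ 2 := hm
      _ = t ^ (N-1) * u t ^ 2 * t ^ (N-1) := h1
      _ ≤ f t * (2*r) ^ (N-1) := by
          exact mul_le_mul_of_nonneg_left (pow_le_pow_left₀ ht0.le ht.2 _) (by positivity)
  have hi1 : IntervalIntegrable f volume 0 r := hii 0 r le_rfl hr1 hr0.le
  have hi2 : IntervalIntegrable f volume r (2*r) := hii r (2*r) hr0.le h2r1 (by linarith)
  have hstep1 : c * r ≤ ∫ t in r..(2*r), f t := by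
    have h := intervalIntegral.integral_mono_on (by linarith : r ≤ 2*r)
      (_root_.intervalIntegrable_const (c := c)) hi2 hlow
    have h2 : ∫ _ in r..(2*r), c = c * r := by
      rw [intervalIntegral.integral_const]
      rw [smul_eq_mul]; ring
    linarith [h2 ▸ h]
  have h0r : (0:ℝ) ≤ ∫ t in (0:ℝ)..r, f t := by
    apply intervalIntegral.integral_nonneg hr0.le
    intro t ht
    exact mul_nonneg (pow_nonneg ht.1 _) (sq_nonneg _)
  have hsplit : (∫ t in (0:ℝ)..r, f t) + (∫ t in r..(2*r), f t) = ∫ t in (0:ℝ)..(2*r), f t :=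
    intervalIntegral.integral_add_adjacent_intervals hi1 hi2
  have hKb := hbound (2*r) ⟨h2r0, h2r1⟩
  have key : c * r ≤ K * (2*r) ^ (2 * s + 2) := by
    calc c * r ≤ ∫ t in r..(2*r), f t := hstep1
      _ ≤ ∫ t in (0:ℝ)..(2*r), f t := by linarith
      _ ≤ K * (2*r) ^ (2 * s + 2) := hKb
  -- algebra
  have h3 : r ^ (2*N-2) * r = r ^ (N-1) * r ^ N := by
    rw [← pow_succ, ← pow_add]; congr 1; omega
  have hcr : c * r = u r ^ 2 * r ^ N / 2 ^ (N-1) := by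
    rw [hc, mul_pow]
    field_simp
    linear_combination (u r ^ 2) * h3
  rw [hcr] at key
  have hB : ((2:ℝ)) ^ ((N:ℝ)-1) = (2:ℝ) ^ (N-1:ℕ) := by
    rw [← Real.rpow_natCast 2 (N-1)]
    congr 1
    rw [Nat.cast_sub (show 1 ≤ N by omega)]
    norm_num
  have hA : (2:ℝ) ^ (2*s+2) * 2 ^ ((N:ℝ)-1) = 2 ^ (2*s+(N:ℝ)+1) := by
    rw [← Real.rpow_add (by norm_num : (0:ℝ) < 2)]; congr 1; ring
  have h2pow : ((2:ℝ)*r) ^ (2*s+2) = 2 ^ (2*s+2) * r ^ (2*s+2) :=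
    Real.mul_rpow (by norm_num) hr0.le
  have key2 : u r ^ 2 * r ^ N ≤ K * 2 ^ (2*s+(N:ℝ)+1) * r ^ (2*s+2) := by
    calc u r ^ 2 * r ^ N = (u r ^ 2 * r ^ N / 2 ^ (N-1)) * 2 ^ (N-1) := by
          field_simp
      _ ≤ K * (2*r) ^ (2*s+2) * 2 ^ (N-1) :=
          mul_le_mul_of_nonneg_right key (by positivity)
      _ = K * (2 ^ (2*s+2) * 2 ^ ((N:ℝ)-1)) * r ^ (2*s+2) := by
          rw [h2pow, hB]; ring
      _ = K * 2 ^ (2*s+(N:ℝ)+1) * r ^ (2*s+2) := by rw [hA]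
  have hrN : (r:ℝ) ^ (N:ℕ) = r ^ ((N:ℝ)) := (Real.rpow_natCast r N).symm
  have key3 : u r ^ 2 ≤ K * 2 ^ (2*s+(N:ℝ)+1) * r ^ (2*s+2-(N:ℝ)) := by
    rw [Real.rpow_sub hr0, ← mul_div_assoc]
    rw [le_div_iff₀ (by positivity : (0:ℝ) < r ^ ((N:ℝ)))]
    rw [← hrN]
    linarith [key2]
  have habs : |u r| = Real.sqrt (u r ^ 2) := (Real.sqrt_sq_eq_abs _).symm
  rw [habs]
  refine le_trans (Real.sqrt_le_sqrt key3) (le_of_eq ?_)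
  rw [Real.sqrt_mul (by positivity) _]
  congr 1
  rw [Real.sqrt_eq_rpow, ← Real.rpow_mul hr0.le]
  congr 1
  ring
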